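/- Let p ≥ 3 be a prime and A, C ∈ ℚ_p with |A|_p < 1 and |C|_p < 1, and let f(x) = (Ax² + 1)/(Cx² + 1). Then f maps the unit sphere S = {x ∈ ℚ_p : |x|_p = 1} into itself, and for all x, y ∈ S one has |f(x) − f(y)|_p ≤ |A − C|_p |x − y|_p. -/

import Mathlib

/-- The mapping `f(x) = (Ax² + 1)/(Cx² + 1)` on `ℚ_p`. -/
noncomputable def fracMap (p : ℕ) [Fact p.Prime] (A C : ℚ_[p]) (x : ℚ_[p]) : ℚ_[p] :=
  (A * x ^ 2 + 1) / (C * x ^ 2 + 1)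

lemma norm_den_one {p : ℕ} [Fact p.Prime] {B x : ℚ_[p]} (hB : ‖B‖ < 1) (hx : ‖x‖ = 1) :
    ‖B * x ^ 2 + 1‖ = 1 := by
  have h1 : ‖B * x ^ 2‖ < 1 := by
    rw [norm_mul, norm_pow, hx]; simpa using hB
  have hne : ‖B * x ^ 2‖ ≠ ‖(1 : ℚ_[p])‖ := by rw [norm_one]; exact ne_of_lt h1
  rw [Padic.add_eq_max_of_ne hne]
  simp [max_eq_right (le_of_lt (by simpa using h1))]

/-- for `p ≥ 3` prime and `|A|_p, |C|_p < 1`, the map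
`f(x) = (Ax²+1)/(Cx²+1)` maps the unit sphere `S = {x : |x|_p = 1}` into itself and satisfies
`|f(x) - f(y)|_p ≤ |A - C|_p |x - y|_p` on `S`. -/
theorem fracMap_sphere_contraction
    (p : ℕ) [Fact p.Prime] (hp : 3 ≤ p)
    (A C : ℚ_[p]) (hA : ‖A‖ < 1) (hC : ‖C‖ < 1) :
    (∀ x : ℚ_[p], ‖x‖ = 1 → ‖fracMap p A C x‖ = 1) ∧
    (∀ x y : ℚ_[p], ‖x‖ = 1 → ‖y‖ = 1 →
      ‖fracMap p A C x - fracMap p A C y‖ ≤ ‖A - C‖ * ‖x - y‖) := by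
  constructor
  · intro x hx
    rw [fracMap, norm_div, norm_den_one hA hx, norm_den_one hC hx]
    norm_num
  · intro x y hx hy
    have hdx : ‖C * x ^ 2 + 1‖ = 1 := norm_den_one hC hx
    have hdy : ‖C * y ^ 2 + 1‖ = 1 := norm_den_one hC hy
    have hdx0 : C * x ^ 2 + 1 ≠ 0 := by intro h; rw [h] at hdx; simp at hdx
    have hdy0 : C * y ^ 2 + 1 ≠ 0 := by intro h; rw [h] at hdy; simp at hdy
    have key : fracMap p A C x - fracMap p A C y =
        (A - C) * (x - y) * (x + y) / ((C * x ^ 2 + 1) * (C * y ^ 2 + 1)) := by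
      rw [fracMap, fracMap]
      rw [div_sub_div _ _ hdx0 hdy0]
      ring
    rw [key, norm_div, norm_mul, norm_mul, norm_mul, hdx, hdy]
    have hxy : ‖x + y‖ ≤ 1 := by
      refine le_trans (Padic.nonarchimedean x y) ?_
      simp [hx, hy]
    calc ‖A - C‖ * ‖x - y‖ * ‖x + y‖ / (1 * 1)
        = ‖A - C‖ * ‖x - y‖ * ‖x + y‖ := by ring
      _ ≤ ‖A - C‖ * ‖x - y‖ * 1 := by
          exact mul_le_mul_of_nonneg_left hxy (by positivity)
      _ = ‖A - C‖ * ‖x - y‖ := by ring
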